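/- Let p, q ∈ [1, ∞), Λ = (λ_i) nondecreasing positive with Σ 1/λ_i = ∞, and ω a modulus of continuity. If limsup_{n→∞} [1/(ω(1/n) n^{1/q})] · max_{1 ≤ k ≤ n} k^{1/q}/(Σ_{i=1}^k 1/λ_i)^{1/p} = +∞, then there exists a function g of bounded p-Λ-variation on [0,1] with g ∉ H_ω^q. -/

import Mathlib

open MeasureTheory

/-- The set of candidate sums defining the p-Λ-variation of `f` on `[0,1]`:
values `(∑ᵢ |f(bᵢ) - f(aᵢ)|^p / λᵢ)^{1/p}` over finite families of
nonoverlapping subintervals `[aᵢ, bᵢ] ⊆ [0,1]`. -/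
def varSet (p : ℝ) (Λ : ℕ → ℝ) (f : ℝ → ℝ) : Set ℝ :=
  {v : ℝ | ∃ (n : ℕ) (a b : Fin n → ℝ),
    (∀ i, 0 ≤ a i ∧ a i ≤ b i ∧ b i ≤ 1) ∧
    (∀ i j, i ≠ j → b i ≤ a j ∨ b j ≤ a i) ∧
    v = (∑ i, |f (b i) - f (a i)| ^ p / Λ (i : ℕ)) ^ (1 / p)}

/-- The p-Λ-variation `V(f)` of `f` on `[0,1]`. -/
noncomputable def pVar (p : ℝ) (Λ : ℕ → ℝ) (f : ℝ → ℝ) : ℝ :=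
  sSup (varSet p Λ f)

/-- `f` belongs to the Waterman–Shiba class `ΛBV^{(p)}` on `[0,1]`. -/
def MemWS (p : ℝ) (Λ : ℕ → ℝ) (f : ℝ → ℝ) : Prop :=
  BddAbove (varSet p Λ f)

/-- The integral modulus of continuity
`ω_q(δ, f) = sup_{0 ≤ γ ≤ δ} (∫₀^{1-γ} |f(t+γ) - f(t)|^q dt)^{1/q}`. -/
noncomputable def omegaq (q : ℝ) (f : ℝ → ℝ) (δ : ℝ) : ℝ :=
  sSup {v : ℝ | ∃ γ : ℝ, 0 ≤ γ ∧ γ ≤ δ ∧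
    v = (∫ t in (0:ℝ)..(1 - γ), |f (t + γ) - f t| ^ q) ^ (1 / q)}

/-- `f` belongs to `H_ω^q`: `f ∈ L^q[0,1]` and `ω_q(δ, f) = O(ω(δ))` as `δ → 0+`. -/
def MemH (q : ℝ) (ω : ℝ → ℝ) (f : ℝ → ℝ) : Prop :=
  MemLp f (ENNReal.ofReal q) (volume.restrict (Set.Icc (0:ℝ) 1)) ∧
  ∃ C : ℝ, ∃ δ₀ : ℝ, 0 < δ₀ ∧ ∀ δ : ℝ, 0 < δ → δ ≤ δ₀ → omegaq q f δ ≤ C * ω δ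

namespace S6Aux

/-- left endpoint of spike `m` in block `j` -/
noncomputable def lep (w : ℕ → ℝ) (j m : ℕ) : ℝ := 1 - (2:ℝ)⁻¹ ^ j + 2 * m * w j

/-- the union of spikes of block `j` -/
noncomputable def spk (w : ℕ → ℝ) (k : ℕ → ℕ) (j : ℕ) : Set ℝ :=
  ⋃ m ∈ Finset.range (k j), Set.Ico (lep w j m) (lep w j m + w j)

/-- the test function -/
noncomputable def gf (w h : ℕ → ℝ) (k : ℕ → ℕ) : ℝ → ℝ :=
  fun x => ∑' j, Set.indicator (spk w k j) (fun _ => h j) x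

def Fit (w : ℕ → ℝ) (k : ℕ → ℕ) : Prop :=
  ∀ j, 0 < w j ∧ 2 * (k j : ℝ) * w j ≤ (2:ℝ)⁻¹ ^ (j + 1)

variable {w h : ℕ → ℝ} {k : ℕ → ℕ}

lemma half_pow_le {n m : ℕ} (hnm : n ≤ m) : (2:ℝ)⁻¹ ^ m ≤ (2:ℝ)⁻¹ ^ n := by
  have h1 : (2:ℝ)⁻¹ ^ m = (2:ℝ)⁻¹ ^ n * (2:ℝ)⁻¹ ^ (m - n) := by
    rw [← pow_add]; congr 1; omega
  have h2 : (2:ℝ)⁻¹ ^ (m - n) ≤ 1 := pow_le_one₀ (by norm_num) (by norm_num)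
  have h3 : (0:ℝ) ≤ (2:ℝ)⁻¹ ^ n := by positivity
  nlinarith

lemma mem_spk {j m : ℕ} {x : ℝ} (hm : m < k j) (h1 : lep w j m ≤ x)
    (h2 : x < lep w j m + w j) : x ∈ spk w k j := by
  simp only [spk, Set.mem_iUnion, Finset.mem_range, Set.mem_Ico, exists_prop]
  exact ⟨m, hm, h1, h2⟩

lemma spk_elim {j : ℕ} {x : ℝ} (hx : x ∈ spk w k j) :
    ∃ m, m < k j ∧ lep w j m ≤ x ∧ x < lep w j m + w j := by
  simpa only [spk, Set.mem_iUnion, Finset.mem_range, Set.mem_Ico, exists_prop,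
    and_assoc] using hx

lemma spk_subset (hf : Fit w k) (j : ℕ) :
    spk w k j ⊆ Set.Ico (1 - (2:ℝ)⁻¹ ^ j) (1 - (2:ℝ)⁻¹ ^ (j + 1)) := by
  intro x hx
  obtain ⟨m, hm, h1, h2⟩ := spk_elim hx
  obtain ⟨hw, hfit⟩ := hf j
  have hm' : (m : ℝ) + 1 ≤ (k j : ℝ) := by exact_mod_cast hm
  have e2 : (2:ℝ)⁻¹ ^ (j + 1) * 2 = (2:ℝ)⁻¹ ^ j := by
    rw [pow_succ]; ring
  have hm0 : (0:ℝ) ≤ (m : ℝ) := Nat.cast_nonneg m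
  constructor
  · have : 0 ≤ 2 * (m:ℝ) * w j := by positivity
    simp only [lep] at h1; linarith
  · simp only [lep] at h2; nlinarith

lemma block_disjoint {j j' : ℕ} (hne : j ≠ j') :
    Disjoint (Set.Ico (1 - (2:ℝ)⁻¹ ^ j) (1 - (2:ℝ)⁻¹ ^ (j + 1)))
      (Set.Ico (1 - (2:ℝ)⁻¹ ^ j') (1 - (2:ℝ)⁻¹ ^ (j' + 1))) := by
  rw [Set.Ico_disjoint_Ico]
  rcases Nat.lt_or_ge j j' with hlt | hge
  · have : (2:ℝ)⁻¹ ^ j' ≤ (2:ℝ)⁻¹ ^ (j + 1) := half_pow_le hlt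
    calc min (1 - (2:ℝ)⁻¹ ^ (j + 1)) (1 - (2:ℝ)⁻¹ ^ (j' + 1))
        ≤ 1 - (2:ℝ)⁻¹ ^ (j + 1) := min_le_left _ _
      _ ≤ 1 - (2:ℝ)⁻¹ ^ j' := by linarith
      _ ≤ max (1 - (2:ℝ)⁻¹ ^ j) (1 - (2:ℝ)⁻¹ ^ j') := le_max_right _ _
  · have hlt : j' < j := lt_of_le_of_ne hge (Ne.symm hne)
    have : (2:ℝ)⁻¹ ^ j ≤ (2:ℝ)⁻¹ ^ (j' + 1) := half_pow_le hlt
    calc min (1 - (2:ℝ)⁻¹ ^ (j + 1)) (1 - (2:ℝ)⁻¹ ^ (j' + 1))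
        ≤ 1 - (2:ℝ)⁻¹ ^ (j' + 1) := min_le_right _ _
      _ ≤ 1 - (2:ℝ)⁻¹ ^ j := by linarith
      _ ≤ max (1 - (2:ℝ)⁻¹ ^ j) (1 - (2:ℝ)⁻¹ ^ j') := le_max_left _ _

lemma spk_disjoint (hf : Fit w k) {j j' : ℕ} (hne : j ≠ j') :
    Disjoint (spk w k j) (spk w k j') :=
  (block_disjoint hne).mono (spk_subset hf j) (spk_subset hf j')

lemma gf_of_mem (hf : Fit w k) {x : ℝ} {j : ℕ} (hx : x ∈ spk w k j) :
    gf w h k x = h j := by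
  have hz : ∀ j' ≠ j, Set.indicator (spk w k j') (fun _ => h j') x = 0 := by
    intro j' hne
    exact Set.indicator_of_notMem
      (fun hx' => Set.disjoint_left.mp (spk_disjoint hf hne) hx' hx) _
  rw [gf, tsum_eq_single j hz, Set.indicator_of_mem hx]

lemma gf_of_not_mem {x : ℝ} (hx : ∀ j, x ∉ spk w k j) : gf w h k x = 0 := by
  have : (fun j => Set.indicator (spk w k j) (fun _ => h j) x) = fun _ => 0 := by
    funext j; exact Set.indicator_of_notMem (hx j) _
  rw [gf, this, tsum_zero]

lemma gf_cases (hf : Fit w k) (x : ℝ) :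
    gf w h k x = 0 ∨ ∃ j, x ∈ spk w k j ∧ gf w h k x = h j := by
  by_cases hx : ∃ j, x ∈ spk w k j
  · obtain ⟨j, hj⟩ := hx
    exact Or.inr ⟨j, hj, gf_of_mem hf hj⟩
  · push_neg at hx
    exact Or.inl (gf_of_not_mem hx)

lemma gf_nonneg (hf : Fit w k) (hh0 : ∀ j, 0 ≤ h j) (x : ℝ) : 0 ≤ gf w h k x := by
  rcases gf_cases hf x with h0 | ⟨j, _, hj⟩
  · rw [h0]
  · rw [hj]; exact hh0 j

lemma gf_le (hf : Fit w k) {B : ℝ} (hB0 : 0 ≤ B) (hB : ∀ j, h j ≤ B) (x : ℝ) :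
    gf w h k x ≤ B := by
  rcases gf_cases hf x with h0 | ⟨j, _, hj⟩
  · rw [h0]; exact hB0
  · rw [hj]; exact hB j

lemma gf_hasSum (hf : Fit w k) (x : ℝ) :
    HasSum (fun j => Set.indicator (spk w k j) (fun _ => h j) x) (gf w h k x) := by
  by_cases hx : ∃ j, x ∈ spk w k j
  · obtain ⟨j, hj⟩ := hx
    have hz : ∀ j' ≠ j, Set.indicator (spk w k j') (fun _ => h j') x = 0 := by
      intro j' hne
      exact Set.indicator_of_notMem
        (fun hx' => Set.disjoint_left.mp (spk_disjoint hf hne) hx' hj) _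
    have := hasSum_single (f := fun j => Set.indicator (spk w k j) (fun _ => h j) x) j hz
    have hval : (fun j => (spk w k j).indicator (fun _ => h j) x) j = gf w h k x := by
      simp only [Set.indicator_of_mem hj]
      exact (gf_of_mem (h := h) hf hj).symm
    rw [show (spk w k j).indicator (fun _ => h j) x = gf w h k x from hval] at this
    exact this
  · push_neg at hx
    have : (fun j => Set.indicator (spk w k j) (fun _ => h j) x) = fun _ => 0 := by
      funext j; exact Set.indicator_of_notMem (hx j) _
    rw [gf_of_not_mem hx, this]
    exact hasSum_zero

lemma spk_measurable (j : ℕ) : MeasurableSet (spk w k j) :=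
  (Finset.range (k j)).measurableSet_biUnion (fun m _ => measurableSet_Ico)

lemma gf_measurable (hf : Fit w k) : Measurable (gf w h k) := by
  apply measurable_of_tendsto_metrizable
    (f := fun N x => ∑ j ∈ Finset.range N, Set.indicator (spk w k j) (fun _ => h j) x)
    (fun N => Finset.measurable_sum _
      (fun j _ => measurable_const.indicator (spk_measurable j)))
  rw [tendsto_pi_nhds]
  intro x
  exact (gf_hasSum hf x).tendsto_sum_nat

lemma sum_antitone_le {f : ℕ → ℝ} (h0 : ∀ i, 0 ≤ f i)
    (hanti : ∀ i j, i ≤ j → f j ≤ f i) (S : Finset ℕ) {m : ℕ} (hm : S.card ≤ m) :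
    ∑ i ∈ S, f i ≤ ∑ i ∈ Finset.range m, f i := by
  have main : ∀ (n : ℕ) (S : Finset ℕ), S.card = n →
      ∑ i ∈ S, f i ≤ ∑ i ∈ Finset.range n, f i := by
    intro n
    induction n with
    | zero => intro S hS; rw [Finset.card_eq_zero.mp hS]; simp
    | succ n ih =>
      intro S hS
      have hne : S.Nonempty := Finset.card_pos.mp (by omega)
      set M := S.max' hne with hM
      have hMmem : M ∈ S := S.max'_mem hne
      have hsub : S ⊆ Finset.range (M + 1) := fun i hi =>
        Finset.mem_range.mpr (Nat.lt_succ_of_le (S.le_max' i hi))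
      have hnM : n ≤ M := by
        have := Finset.card_le_card hsub
        rw [hS, Finset.card_range] at this; omega
      have hcard : (S.erase M).card = n := by
        rw [Finset.card_erase_of_mem hMmem, hS]; omega
      rw [← Finset.add_sum_erase S f hMmem, Finset.sum_range_succ]
      have h1 := ih (S.erase M) hcard
      have h2 := hanti n M hnM
      linarith
  calc ∑ i ∈ S, f i ≤ ∑ i ∈ Finset.range S.card, f i := main _ S rfl
    _ ≤ ∑ i ∈ Finset.range m, f i :=
      Finset.sum_le_sum_of_subset_of_nonneg (Finset.range_subset_range.mpr hm)
        (fun i _ _ => h0 i)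

lemma geom_le_two (N : ℕ) : ∑ j ∈ Finset.range N, (2:ℝ)⁻¹ ^ j ≤ 2 := by
  rw [geom_sum_eq (by norm_num : (2:ℝ)⁻¹ ≠ 1)]
  have h1 : (0:ℝ) ≤ (2:ℝ)⁻¹ ^ N := by positivity
  rw [div_le_iff_of_neg (by norm_num : (2:ℝ)⁻¹ - 1 < 0)]
  linarith

/-- boundary points of block `j` -/
noncomputable def bpts (w : ℕ → ℝ) (k : ℕ → ℕ) (j : ℕ) : Finset ℝ :=
  ((Finset.range (k j)).image fun m => lep w j m) ∪
    ((Finset.range (k j)).image fun m => lep w j m + w j)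

lemma bpts_card (j : ℕ) : (bpts w k j).card ≤ 2 * k j := by
  have h1 := Finset.card_union_le ((Finset.range (k j)).image fun m => lep w j m)
    ((Finset.range (k j)).image fun m => lep w j m + w j)
  have h2 := Finset.card_image_le (s := Finset.range (k j)) (f := fun m => lep w j m)
  have h3 := Finset.card_image_le (s := Finset.range (k j))
    (f := fun m => lep w j m + w j)
  rw [Finset.card_range] at h2 h3
  calc (bpts w k j).card ≤ _ := h1
    _ ≤ 2 * k j := by omega

lemma exists_bdry (hf : Fit w k) (hh0 : ∀ j, 0 ≤ h j) {u v : ℝ} (huv : u ≤ v)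
    (hne : gf w h k u ≠ gf w h k v) :
    ∃ j, |gf w h k v - gf w h k u| ≤ h j ∧
      ∃ β ∈ bpts w k j, β ∈ Set.Ioc u v := by
  have hnn : ∀ x, 0 ≤ gf w h k x := gf_nonneg hf hh0
  rcases lt_trichotomy (gf w h k u) (gf w h k v) with hlt | heq | hgt
  · have hv0 : gf w h k v ≠ 0 := (lt_of_le_of_lt (hnn u) hlt).ne'
    rcases gf_cases (h := h) hf v with h0 | ⟨j, hmemv, hval⟩
    · exact absurd h0 hv0
    obtain ⟨m, hm, h1, h2⟩ := spk_elim hmemv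
    have hu_not : ¬(lep w j m ≤ u) := by
      intro hc
      have hu2 : u < lep w j m + w j := lt_of_le_of_lt huv h2
      have : gf w h k u = h j := gf_of_mem hf (mem_spk hm hc hu2)
      rw [this, ← hval] at hlt
      exact lt_irrefl _ hlt
    push_neg at hu_not
    refine ⟨j, ?_, lep w j m, ?_, hu_not, h1⟩
    · rw [abs_of_pos (sub_pos.mpr hlt), hval]
      have := hnn u; linarith
    · exact Finset.mem_union_left _ (Finset.mem_image_of_mem _ (Finset.mem_range.mpr hm))
  · exact absurd heq hne
  · have hu0 : gf w h k u ≠ 0 := (lt_of_le_of_lt (hnn v) hgt).ne'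
    rcases gf_cases (h := h) hf u with h0 | ⟨j, hmemu, hval⟩
    · exact absurd h0 hu0
    obtain ⟨m, hm, h1, h2⟩ := spk_elim hmemu
    have hv_not : ¬(v < lep w j m + w j) := by
      intro hc
      have hv1 : lep w j m ≤ v := le_trans h1 huv
      have : gf w h k v = h j := gf_of_mem hf (mem_spk hm hv1 hc)
      rw [this, ← hval] at hgt
      exact lt_irrefl _ hgt
    push_neg at hv_not
    refine ⟨j, ?_, lep w j m + w j, ?_, h2, hv_not⟩
    · rw [abs_of_neg (sub_neg.mpr hgt), neg_sub, hval]
      have := hnn v; linarith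
    · exact Finset.mem_union_right _ (Finset.mem_image_of_mem _ (Finset.mem_range.mpr hm))


theorem memWS_gf (p : ℝ) (hp : 1 ≤ p) (Λ : ℕ → ℝ) (hΛpos : ∀ i, 0 < Λ i)
    (hΛmono : Monotone Λ) (hf : Fit w k) (hh0 : ∀ j, 0 ≤ h j)
    (hhp : ∀ j, h j ^ p * (∑ i ∈ Finset.range (2 * k j), 1 / Λ i) ≤ 2 * (2:ℝ)⁻¹ ^ j) :
    MemWS p Λ (gf w h k) := by
  classical
  refine ⟨4, ?_⟩
  rintro v ⟨n, a, b, hab, hno, rfl⟩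
  set g := gf w h k with hgdef
  have hp0 : (0:ℝ) < p := lt_of_lt_of_le one_pos hp
  have hdata : ∀ i : Fin n, ∃ jβ : ℕ × ℝ, g (a i) ≠ g (b i) →
      (|g (b i) - g (a i)| ≤ h jβ.1 ∧ jβ.2 ∈ bpts w k jβ.1 ∧
        jβ.2 ∈ Set.Ioc (a i) (b i)) := by
    intro i
    by_cases hi : g (a i) = g (b i)
    · exact ⟨(0, 0), fun hc => absurd hi hc⟩
    · obtain ⟨j, hle, β, hβ1, hβ2⟩ := exists_bdry hf hh0 (hab i).2.1 hi
      exact ⟨(j, β), fun _ => ⟨hle, hβ1, hβ2⟩⟩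
  choose JB hJB using hdata
  set J : Fin n → ℕ := fun i => (JB i).1 with hJdef
  set β : Fin n → ℝ := fun i => (JB i).2 with hβdef
  set D : Finset (Fin n) := Finset.univ.filter (fun i => g (a i) ≠ g (b i)) with hD
  have hmemD : ∀ i ∈ D, g (a i) ≠ g (b i) := fun i hi => (Finset.mem_filter.mp hi).2
  have hsum0 : ∑ i : Fin n, |g (b i) - g (a i)| ^ p / Λ (i : ℕ)
      = ∑ i ∈ D, |g (b i) - g (a i)| ^ p / Λ (i : ℕ) := by
    refine (Finset.sum_subset (Finset.filter_subset _ _) ?_).symm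
    intro i _ hiD
    have : g (a i) = g (b i) := by
      by_contra hc
      exact hiD (Finset.mem_filter.mpr ⟨Finset.mem_univ i, hc⟩)
    rw [← this, sub_self, abs_zero, Real.zero_rpow hp0.ne', zero_div]
  have hstep1 : ∑ i ∈ D, |g (b i) - g (a i)| ^ p / Λ (i : ℕ)
      ≤ ∑ i ∈ D, h (J i) ^ p / Λ (i : ℕ) := by
    refine Finset.sum_le_sum (fun i hi => ?_)
    have h1 := (hJB i (hmemD i hi)).1
    have h2 := Real.rpow_le_rpow (abs_nonneg _) h1 hp0.le
    rw [div_eq_mul_inv, div_eq_mul_inv]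
    exact mul_le_mul_of_nonneg_right h2 (inv_nonneg.mpr (hΛpos _).le)
  have hfib := Finset.sum_fiberwise_of_maps_to (t := D.image J)
    (fun i (hi : i ∈ D) => Finset.mem_image_of_mem J hi)
    (fun i : Fin n => h (J i) ^ p / Λ (i : ℕ))
  have hfiber : ∀ j ∈ D.image J,
      ∑ i ∈ D.filter (fun i => J i = j), h (J i) ^ p / Λ (i : ℕ)
        ≤ 2 * (2:ℝ)⁻¹ ^ j := by
    intro j hj
    set Dj := D.filter (fun i => J i = j) with hDj
    have hmemDj : ∀ i ∈ Dj, i ∈ D ∧ J i = j := fun i hi => by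
      have := Finset.mem_filter.mp hi; exact ⟨this.1, this.2⟩
    have hcongr : ∑ i ∈ Dj, h (J i) ^ p / Λ (i : ℕ)
        = ∑ i ∈ Dj, h j ^ p * (1 / Λ (i : ℕ)) := by
      refine Finset.sum_congr rfl (fun i hi => ?_)
      rw [(hmemDj i hi).2, mul_one_div]
    rw [hcongr, ← Finset.mul_sum]
    have hinj : Set.InjOn β Dj := by
      intro i hi i' hi' heq
      by_contra hne2
      have hio := (hJB i (hmemD i (hmemDj i hi).1)).2.2
      have hio' := (hJB i' (hmemD i' (hmemDj i' hi').1)).2.2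
      have h1 : a i < β i := hio.1
      have h2 : β i ≤ b i := hio.2
      have h3 : a i' < β i' := hio'.1
      have h4 : β i' ≤ b i' := hio'.2
      rcases hno i i' hne2 with hc | hc
      · rw [heq] at h2; linarith
      · rw [heq] at h1; linarith
    have hmaps : ∀ i ∈ Dj, β i ∈ bpts w k j := fun i hi => by
      have h5 := (hJB i (hmemD i (hmemDj i hi).1)).2.1
      have hJi : (JB i).1 = j := (hmemDj i hi).2
      exact hJi ▸ h5
    have hcard : Dj.card ≤ 2 * k j :=
      le_trans (Finset.card_le_card_of_injOn β hmaps hinj) (bpts_card j)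
    have hvinj : ∀ x ∈ Dj, ∀ y ∈ Dj, (x : ℕ) = (y : ℕ) → x = y :=
      fun x _ y _ hxy => Fin.val_injective hxy
    have himg : ∑ m ∈ Dj.image Fin.val, 1 / Λ m = ∑ i ∈ Dj, 1 / Λ (i : ℕ) := by
      exact Finset.sum_image hvinj
    have hsumΛ : ∑ i ∈ Dj, 1 / Λ (i : ℕ) ≤ ∑ i ∈ Finset.range (2 * k j), 1 / Λ i := by
      rw [← himg]
      refine sum_antitone_le (fun i => one_div_nonneg.mpr (hΛpos i).le)
        (fun i i' hii => one_div_le_one_div_of_le (hΛpos i) (hΛmono hii)) _ ?_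
      calc (Dj.image Fin.val).card ≤ Dj.card := Finset.card_image_le
        _ ≤ 2 * k j := hcard
    calc h j ^ p * ∑ i ∈ Dj, 1 / Λ (i : ℕ)
        ≤ h j ^ p * ∑ i ∈ Finset.range (2 * k j), 1 / Λ i :=
          mul_le_mul_of_nonneg_left hsumΛ (Real.rpow_nonneg (hh0 j) p)
      _ ≤ 2 * (2:ℝ)⁻¹ ^ j := hhp j
  have htot : ∑ j ∈ D.image J, (2 * (2:ℝ)⁻¹ ^ j) ≤ 4 := by
    set T := D.image J with hT
    have hsub : T ⊆ Finset.range (T.sup id + 1) := fun j hj =>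
      Finset.mem_range.mpr (Nat.lt_succ_of_le (Finset.le_sup (f := id) hj))
    calc ∑ j ∈ T, (2 * (2:ℝ)⁻¹ ^ j)
        ≤ ∑ j ∈ Finset.range (T.sup id + 1), (2 * (2:ℝ)⁻¹ ^ j) :=
          Finset.sum_le_sum_of_subset_of_nonneg hsub (fun j _ _ => by positivity)
      _ = 2 * ∑ j ∈ Finset.range (T.sup id + 1), (2:ℝ)⁻¹ ^ j := by
          rw [Finset.mul_sum]
      _ ≤ 2 * 2 := by have := geom_le_two (T.sup id + 1); linarith
      _ = 4 := by norm_num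
  have hS : ∑ i : Fin n, |g (b i) - g (a i)| ^ p / Λ (i : ℕ) ≤ 4 := by
    rw [hsum0]
    calc ∑ i ∈ D, |g (b i) - g (a i)| ^ p / Λ (i : ℕ)
        ≤ ∑ i ∈ D, h (J i) ^ p / Λ (i : ℕ) := hstep1
      _ = ∑ j ∈ D.image J, ∑ i ∈ D.filter (fun i => J i = j),
            h (J i) ^ p / Λ (i : ℕ) := hfib.symm
      _ ≤ ∑ j ∈ D.image J, (2 * (2:ℝ)⁻¹ ^ j) := Finset.sum_le_sum hfiber
      _ ≤ 4 := htot
  have hS0 : 0 ≤ ∑ i : Fin n, |g (b i) - g (a i)| ^ p / Λ (i : ℕ) :=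
    Finset.sum_nonneg (fun i _ =>
      div_nonneg (Real.rpow_nonneg (abs_nonneg _) _) (hΛpos _).le)
  calc (∑ i : Fin n, |g (b i) - g (a i)| ^ p / Λ (i : ℕ)) ^ (1 / p)
      ≤ (4:ℝ) ^ (1 / p) := Real.rpow_le_rpow hS0 hS (by positivity)
    _ ≤ (4:ℝ) ^ (1:ℝ) :=
        Real.rpow_le_rpow_of_exponent_le (by norm_num) ((div_le_one hp0).mpr hp)
    _ = 4 := Real.rpow_one 4


set_option maxHeartbeats 1000000 in
theorem omegaq_lower (q : ℝ) (hq : 1 ≤ q) (hf : Fit w k) (hh0 : ∀ j, 0 ≤ h j)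
    {B : ℝ} (hB0 : 0 ≤ B) (hB : ∀ j, h j ≤ B) {j : ℕ} (hj : 1 ≤ j) (hk : 1 ≤ k j) :
    h j * ((k j : ℝ) * w j) ^ (1 / q) ≤ omegaq q (gf w h k) (w j) := by
  have hq0 : (0:ℝ) < q := lt_of_lt_of_le one_pos hq
  obtain ⟨hwj, hfitj⟩ := hf j
  have hk1 : (1:ℝ) ≤ (k j : ℝ) := by exact_mod_cast hk
  have hwe : w j ≤ (2:ℝ)⁻¹ ^ (j + 1) := by nlinarith
  have hejhalf : (2:ℝ)⁻¹ ^ (j + 1) ≤ 2⁻¹ := by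
    have := half_pow_le (n := 1) (m := j + 1) (by omega); rwa [pow_one] at this
  have hw1 : w j ≤ 2⁻¹ := le_trans hwe hejhalf
  set g := gf w h k with hg
  have hgm : Measurable g := gf_measurable hf
  have hg0 : ∀ x, 0 ≤ g x := gf_nonneg hf hh0
  have hgB : ∀ x, g x ≤ B := gf_le hf hB0 hB
  have hFb : ∀ (γ t : ℝ), |g (t + γ) - g t| ^ q ≤ B ^ q := by
    intro γ t
    apply Real.rpow_le_rpow (abs_nonneg _) ?_ hq0.le
    rw [abs_sub_le_iff]
    constructor <;> [skip; skip] <;>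
      linarith [hg0 (t + γ), hg0 t, hgB (t + γ), hgB t]
  have hFm : ∀ γ : ℝ, Measurable (fun t => |g (t + γ) - g t| ^ q) := by
    intro γ
    have h1 : Measurable fun t : ℝ => g (t + γ) := hgm.comp (measurable_id.add_const γ)
    exact (Real.continuous_rpow_const hq0.le).measurable.comp ((h1.sub hgm).abs)
  have hFi : ∀ (γ z : ℝ), 0 ≤ z →
      IntervalIntegrable (fun t => |g (t + γ) - g t| ^ q) volume 0 z := by
    intro γ z hz
    rw [intervalIntegrable_iff_integrableOn_Ioc_of_le hz]
    refine Integrable.mono' (g := fun _ => B ^ q)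
      ((integrableOn_const_iff).mpr (Or.inr measure_Ioc_lt_top))
      ((hFm γ).aestronglyMeasurable) ?_
    filter_upwards with t
    rw [Real.norm_eq_abs, abs_of_nonneg (Real.rpow_nonneg (abs_nonneg _) _)]
    exact hFb γ t
  have hbdd : BddAbove {v : ℝ | ∃ γ : ℝ, 0 ≤ γ ∧ γ ≤ w j ∧
      v = (∫ t in (0:ℝ)..(1 - γ), |g (t + γ) - g t| ^ q) ^ (1 / q)} := by
    refine ⟨B, ?_⟩
    rintro v ⟨γ, hγ0, hγle, rfl⟩
    have h1γ : 0 ≤ 1 - γ := by linarith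
    have hint0 : 0 ≤ ∫ t in (0:ℝ)..(1 - γ), |g (t + γ) - g t| ^ q :=
      intervalIntegral.integral_nonneg h1γ (fun t _ => Real.rpow_nonneg (abs_nonneg _) _)
    have hintle : (∫ t in (0:ℝ)..(1 - γ), |g (t + γ) - g t| ^ q) ≤ B ^ q := by
      have hm := intervalIntegral.integral_mono_on h1γ (hFi γ _ h1γ)
        intervalIntegrable_const (fun t _ => hFb γ t)
      have hc : (∫ _ in (0:ℝ)..(1 - γ), B ^ q) = (1 - γ) * B ^ q := by
        simp [smul_eq_mul]
      rw [hc] at hm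
      nlinarith [Real.rpow_nonneg hB0 q]
    calc (∫ t in (0:ℝ)..(1 - γ), |g (t + γ) - g t| ^ q) ^ (1 / q)
        ≤ (B ^ q) ^ (1 / q) := Real.rpow_le_rpow hint0 hintle (by positivity)
      _ = B := by
          rw [← Real.rpow_mul hB0, mul_one_div, div_self hq0.ne', Real.rpow_one]
  set γ0 := w j with hγ0def
  have h1γ : 0 ≤ 1 - γ0 := by linarith
  have hmem : (∫ t in (0:ℝ)..(1 - γ0), |g (t + γ0) - g t| ^ q) ^ (1 / q) ∈
      {v : ℝ | ∃ γ : ℝ, 0 ≤ γ ∧ γ ≤ w j ∧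
        v = (∫ t in (0:ℝ)..(1 - γ), |g (t + γ) - g t| ^ q) ^ (1 / q)} :=
    ⟨γ0, hwj.le, le_rfl, rfl⟩
  have hsup := le_csSup hbdd hmem
  have epow : (2:ℝ)⁻¹ ^ j = 2 * (2:ℝ)⁻¹ ^ (j + 1) := by
    rw [pow_succ]; ring
  have hkey : ∀ t ∈ spk w k j, g t = h j ∧ g (t + γ0) = 0 := by
    intro t ht
    obtain ⟨m, hm, ht1, ht2⟩ := spk_elim ht
    have hm' : (m : ℝ) + 1 ≤ (k j : ℝ) := by exact_mod_cast hm
    have hm0 : (0:ℝ) ≤ (m : ℝ) := Nat.cast_nonneg m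
    refine ⟨gf_of_mem hf ht, ?_⟩
    apply gf_of_not_mem
    intro j' hmem'
    by_cases hjj : j' = j
    · subst hjj
      obtain ⟨m', hm'2, hs1, hs2⟩ := spk_elim hmem'
      have hm'0 : (0:ℝ) ≤ (m' : ℝ) := Nat.cast_nonneg m'
      simp only [lep] at ht1 ht2 hs1 hs2
      rcases le_or_gt m' m with hle | hlt
      · have hcast : (m' : ℝ) ≤ (m : ℝ) := by exact_mod_cast hle
        nlinarith
      · have hcast : (m : ℝ) + 1 ≤ (m' : ℝ) := by exact_mod_cast hlt
        nlinarith
    · have hblk' := spk_subset hf j' hmem'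
      have hblk : t + γ0 ∈ Set.Ico (1 - (2:ℝ)⁻¹ ^ j) (1 - (2:ℝ)⁻¹ ^ (j + 1)) := by
        simp only [lep] at ht1 ht2
        refine Set.mem_Ico.mpr ⟨?_, ?_⟩
        · nlinarith
        · nlinarith
      exact Set.disjoint_left.mp (block_disjoint hjj) hblk' hblk
  set U := spk w k j with hU
  have hUm : MeasurableSet U := spk_measurable j
  have hUsub : U ⊆ Set.Ioc 0 (1 - γ0) := by
    intro x hx
    have hxb := spk_subset hf j hx
    have h2j : (2:ℝ)⁻¹ ^ j ≤ 2⁻¹ := by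
      have := half_pow_le (n := 1) (m := j) hj; rwa [pow_one] at this
    refine Set.mem_Ioc.mpr ⟨?_, ?_⟩
    · have := hxb.1; simp only [Set.mem_Ico] at hxb; linarith [hxb.1]
    · simp only [Set.mem_Ico] at hxb; linarith [hxb.2]
  have hφle : ∀ t ∈ Set.Icc (0:ℝ) (1 - γ0),
      U.indicator (fun _ => h j ^ q) t ≤ |g (t + γ0) - g t| ^ q := by
    intro t _
    by_cases ht : t ∈ U
    · obtain ⟨hgt, hgt2⟩ := hkey t ht
      rw [Set.indicator_of_mem ht, hgt2, hgt, zero_sub, abs_neg, abs_of_nonneg (hh0 j)]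
    · rw [Set.indicator_of_notMem ht]
      exact Real.rpow_nonneg (abs_nonneg _) _
  have hφint : IntervalIntegrable (U.indicator fun _ => h j ^ q) volume 0 (1 - γ0) := by
    rw [intervalIntegrable_iff_integrableOn_Ioc_of_le h1γ]
    exact ((integrableOn_const_iff).mpr (Or.inr measure_Ioc_lt_top)).indicator hUm
  have hdisj2 : ∀ m m' : ℕ, m ≠ m' →
      Disjoint (Set.Ico (lep w j m) (lep w j m + w j))
        (Set.Ico (lep w j m') (lep w j m' + w j)) := by
    intro m m' hmm
    refine Set.Ico_disjoint_Ico.mpr ?_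
    rcases Nat.lt_or_ge m m' with hlt | hge
    · have hcast : (m : ℝ) + 1 ≤ (m' : ℝ) := by exact_mod_cast hlt
      refine le_trans (min_le_left _ _) (le_trans ?_ (le_max_right _ _))
      simp only [lep]; nlinarith
    · have hlt' : m' < m := lt_of_le_of_ne hge (Ne.symm hmm)
      have hcast : (m' : ℝ) + 1 ≤ (m : ℝ) := by exact_mod_cast hlt'
      refine le_trans (min_le_right _ _) (le_trans ?_ (le_max_left _ _))
      simp only [lep]; nlinarith
  have hpd : (↑(Finset.range (k j)) : Set ℕ).PairwiseDisjoint
      (fun m => Set.Ico (lep w j m) (lep w j m + w j)) :=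
    fun m _ m' _ hmm => hdisj2 m m' hmm
  have hvolU : volume U = ENNReal.ofReal ((k j : ℝ) * w j) := by
    rw [hU, spk, measure_biUnion_finset hpd (fun m _ => measurableSet_Ico)]
    have hvol : ∀ m ∈ Finset.range (k j),
        volume (Set.Ico (lep w j m) (lep w j m + w j)) = ENNReal.ofReal (w j) := by
      intro m _; rw [Real.volume_Ico]; congr 1; ring
    rw [Finset.sum_congr rfl hvol, Finset.sum_const, Finset.card_range, nsmul_eq_mul]
    rw [← ENNReal.ofReal_natCast (k j), ← ENNReal.ofReal_mul (by positivity)]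
  have hIone : (∫ t in (0:ℝ)..(1 - γ0), U.indicator (fun _ => h j ^ q) t)
      = h j ^ q * ((k j : ℝ) * w j) := by
    rw [intervalIntegral.integral_of_le h1γ, setIntegral_indicator hUm,
      Set.inter_eq_self_of_subset_right hUsub, setIntegral_const, measureReal_def, hvolU,
      ENNReal.toReal_ofReal (by positivity), smul_eq_mul]
    ring
  have hIlower : h j ^ q * ((k j : ℝ) * w j)
      ≤ ∫ t in (0:ℝ)..(1 - γ0), |g (t + γ0) - g t| ^ q := by
    have := intervalIntegral.integral_mono_on h1γ hφint (hFi γ0 _ h1γ) hφle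
    rwa [hIone] at this
  have hkw : (0:ℝ) ≤ (k j : ℝ) * w j := mul_nonneg (Nat.cast_nonneg _) hwj.le
  have hnn : 0 ≤ h j ^ q * ((k j : ℝ) * w j) :=
    mul_nonneg (Real.rpow_nonneg (hh0 j) q) hkw
  have hfinal : h j * ((k j : ℝ) * w j) ^ (1 / q)
      ≤ (∫ t in (0:ℝ)..(1 - γ0), |g (t + γ0) - g t| ^ q) ^ (1 / q) := by
    have heq : h j * ((k j : ℝ) * w j) ^ (1 / q)
        = (h j ^ q * ((k j : ℝ) * w j)) ^ (1 / q) := by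
      rw [Real.mul_rpow (Real.rpow_nonneg (hh0 j) q) hkw,
        ← Real.rpow_mul (hh0 j), mul_one_div, div_self hq0.ne', Real.rpow_one]
    rw [heq]
    exact Real.rpow_le_rpow hnn hIlower (by positivity)
  rw [omegaq]
  exact le_trans hfinal hsup

end S6Aux

/-- necessity: if
`limsup_n (1/(ω(1/n) n^{1/q})) · max_{1 ≤ k ≤ n} k^{1/q}/(∑_{i=1}^k 1/λᵢ)^{1/p} = +∞`
(i.e. the sequence is not bounded above), then there is `g ∈ ΛBV^{(p)}` with `g ∉ H_ω^q`. -/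
theorem stmt6 (p q : ℝ) (hp : 1 ≤ p) (hq : 1 ≤ q)
    (Λ : ℕ → ℝ) (hΛpos : ∀ i, 0 < Λ i) (hΛmono : Monotone Λ)
    (hΛdiv : Filter.Tendsto (fun n => ∑ i ∈ Finset.range n, 1 / Λ i) Filter.atTop Filter.atTop)
    (ω : ℝ → ℝ) (hω0 : ω 0 = 0) (hωmono : MonotoneOn ω (Set.Icc 0 1))
    (hωcont : ContinuousOn ω (Set.Icc 0 1)) (hωpos : ∀ t : ℝ, 0 < t → t ≤ 1 → 0 < ω t)
    (hunbdd : ¬ Filter.IsBoundedUnder (· ≤ ·) Filter.atTop (fun n : ℕ =>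
      (1 / (ω (1 / n) * (n : ℝ) ^ (1 / q))) *
        sSup {v : ℝ | ∃ k : ℕ, 1 ≤ k ∧ k ≤ n ∧
          v = (k : ℝ) ^ (1 / q) / (∑ i ∈ Finset.range k, 1 / Λ i) ^ (1 / p)})) :
    ∃ g : ℝ → ℝ, MemWS p Λ g ∧ ¬ MemH q ω g := by
  classical
  have hp0 : (0:ℝ) < p := lt_of_lt_of_le one_pos hp
  have hq0 : (0:ℝ) < q := lt_of_lt_of_le one_pos hq
  set Λb : ℕ → ℝ := fun m => ∑ i ∈ Finset.range m, 1 / Λ i with hΛb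
  have hΛbpos : ∀ m, 1 ≤ m → 0 < Λb m := by
    intro m hm
    refine Finset.sum_pos (fun i _ => one_div_pos.mpr (hΛpos i)) ?_
    rw [Finset.nonempty_range_iff]; omega
  have hΛbmono : Monotone Λb := fun m m' hmm =>
    Finset.sum_le_sum_of_subset_of_nonneg (Finset.range_subset_range.mpr hmm)
      (fun i _ _ => one_div_nonneg.mpr (hΛpos i).le)
  set u : ℕ → ℝ := fun n : ℕ =>
      (1 / (ω (1 / n) * (n : ℝ) ^ (1 / q))) *
        sSup {v : ℝ | ∃ k : ℕ, 1 ≤ k ∧ k ≤ n ∧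
          v = (k : ℝ) ^ (1 / q) / (∑ i ∈ Finset.range k, 1 / Λ i) ^ (1 / p)} with hu
  have hfreq : ∀ C : ℝ, ∃ n : ℕ, 1 ≤ n ∧ C < u n := by
    intro C
    by_contra hcon
    push_neg at hcon
    refine hunbdd ⟨C, ?_⟩
    rw [Filter.eventually_map]
    exact Filter.eventually_atTop.mpr ⟨1, fun n hn => hcon n hn⟩
  have hsel : ∀ j : ℕ, ∃ n : ℕ, 1 ≤ n ∧
      ((j : ℝ) / ((2:ℝ)⁻¹ ^ j * ((2:ℝ)⁻¹ ^ (j + 2)) ^ (1 / q))) < u n :=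
    fun j => hfreq _
  choose nj hnj1 hnjT using hsel
  have hnjpos : ∀ j, (0:ℝ) < (nj j : ℝ) := fun j => by
    have := hnj1 j; exact_mod_cast Nat.lt_of_lt_of_le Nat.zero_lt_one this
  have hkex : ∀ j : ℕ, ∃ kk : ℕ, 1 ≤ kk ∧ kk ≤ nj j ∧
      sSup {v : ℝ | ∃ k : ℕ, 1 ≤ k ∧ k ≤ nj j ∧
          v = (k : ℝ) ^ (1 / q) / (∑ i ∈ Finset.range k, 1 / Λ i) ^ (1 / p)}
        = (kk : ℝ) ^ (1 / q) / (∑ i ∈ Finset.range kk, 1 / Λ i) ^ (1 / p) := by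
    intro j
    set S : Set ℝ := {v : ℝ | ∃ k : ℕ, 1 ≤ k ∧ k ≤ nj j ∧
      v = (k : ℝ) ^ (1 / q) / (∑ i ∈ Finset.range k, 1 / Λ i) ^ (1 / p)} with hS
    have hSeq : S = ↑((Finset.Icc 1 (nj j)).image fun k : ℕ =>
        (k : ℝ) ^ (1 / q) / (∑ i ∈ Finset.range k, 1 / Λ i) ^ (1 / p)) := by
      ext v
      simp only [hS, Set.mem_setOf_eq, Finset.coe_image, Set.mem_image,
        Finset.mem_coe, Finset.mem_Icc]
      constructor
      · rintro ⟨kk, h1, h2, rfl⟩; exact ⟨kk, ⟨h1, h2⟩, rfl⟩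
      · rintro ⟨kk, ⟨h1, h2⟩, rfl⟩; exact ⟨kk, h1, h2, rfl⟩
    have hfin : S.Finite := by rw [hSeq]; exact Finset.finite_toSet _
    have hne : S.Nonempty := ⟨_, ⟨1, le_rfl, hnj1 j, rfl⟩⟩
    obtain ⟨kk, hk1, hk2, hkeq⟩ := hne.csSup_mem hfin
    exact ⟨kk, hk1, hk2, hkeq⟩
  choose kj hkj1 hkjle hkjs using hkex
  set ww : ℕ → ℝ := fun j => (2:ℝ)⁻¹ ^ (j + 2) / nj j with hww
  set hh : ℕ → ℝ := fun j => (2:ℝ)⁻¹ ^ j / (Λb (kj j)) ^ (1 / p) with hhh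
  have hfit : S6Aux.Fit ww kj := by
    intro j
    have hn := hnjpos j
    have hkle : (kj j : ℝ) ≤ (nj j : ℝ) := by exact_mod_cast hkjle j
    have hkn0 : (0:ℝ) ≤ (kj j : ℝ) := Nat.cast_nonneg _
    constructor
    · show 0 < (2:ℝ)⁻¹ ^ (j + 2) / (nj j : ℝ)
      positivity
    · show 2 * (kj j : ℝ) * ((2:ℝ)⁻¹ ^ (j + 2) / (nj j : ℝ)) ≤ (2:ℝ)⁻¹ ^ (j + 1)
      have e2 : (2:ℝ)⁻¹ ^ (j + 1) = 2 * (2:ℝ)⁻¹ ^ (j + 2) := by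
        rw [pow_succ]; ring
      have hdiv : (kj j : ℝ) / (nj j : ℝ) ≤ 1 := (div_le_one hn).mpr hkle
      calc 2 * (kj j : ℝ) * ((2:ℝ)⁻¹ ^ (j + 2) / (nj j : ℝ))
          = 2 * (2:ℝ)⁻¹ ^ (j + 2) * ((kj j : ℝ) / (nj j : ℝ)) := by ring
        _ ≤ 2 * (2:ℝ)⁻¹ ^ (j + 2) * 1 :=
            mul_le_mul_of_nonneg_left hdiv (by positivity)
        _ = (2:ℝ)⁻¹ ^ (j + 1) := by rw [mul_one, e2]
  have hΛkpos : ∀ j, 0 < Λb (kj j) := fun j => hΛbpos _ (hkj1 j)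
  have hh0 : ∀ j, 0 ≤ hh j := fun j => by
    show 0 ≤ (2:ℝ)⁻¹ ^ j / (Λb (kj j)) ^ (1 / p)
    exact div_nonneg (by positivity) (Real.rpow_nonneg (hΛkpos j).le _)
  have hΛ1pos : 0 < Λb 1 := hΛbpos 1 le_rfl
  set B : ℝ := 1 / (Λb 1) ^ (1 / p) with hB
  have hBpos : 0 < B := one_div_pos.mpr (Real.rpow_pos_of_pos hΛ1pos _)
  have hBle : ∀ j, hh j ≤ B := by
    intro j
    show (2:ℝ)⁻¹ ^ j / (Λb (kj j)) ^ (1 / p) ≤ 1 / (Λb 1) ^ (1 / p)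
    exact div_le_div₀ (by norm_num) (pow_le_one₀ (by norm_num) (by norm_num))
      (Real.rpow_pos_of_pos hΛ1pos _)
      (Real.rpow_le_rpow hΛ1pos.le (hΛbmono (hkj1 j)) (by positivity))
  have hΛb2 : ∀ m : ℕ, Λb (2 * m) ≤ 2 * Λb m := by
    intro m
    have h2m : 2 * m = m + m := by ring
    rw [h2m]
    show (∑ i ∈ Finset.range (m + m), 1 / Λ i) ≤ 2 * ∑ i ∈ Finset.range m, 1 / Λ i
    rw [Finset.sum_range_add]
    have hle : ∑ i ∈ Finset.range m, 1 / Λ (m + i) ≤ ∑ i ∈ Finset.range m, 1 / Λ i :=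
      Finset.sum_le_sum (fun i _ =>
        one_div_le_one_div_of_le (hΛpos i) (hΛmono (by omega)))
    linarith
  have hhp : ∀ j, hh j ^ p * (∑ i ∈ Finset.range (2 * kj j), 1 / Λ i)
      ≤ 2 * (2:ℝ)⁻¹ ^ j := by
    intro j
    have hpj : 0 < Λb (kj j) := hΛkpos j
    have hhpv : hh j ^ p = ((2:ℝ)⁻¹ ^ j) ^ p / Λb (kj j) := by
      show ((2:ℝ)⁻¹ ^ j / (Λb (kj j)) ^ (1 / p)) ^ p = _
      rw [Real.div_rpow (by positivity) (Real.rpow_nonneg hpj.le _)]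
      congr 1
      rw [← Real.rpow_mul hpj.le, one_div_mul_cancel hp0.ne', Real.rpow_one]
    have hx1 : ((2:ℝ)⁻¹ ^ j) ^ p ≤ (2:ℝ)⁻¹ ^ j := by
      have hxpos : (0:ℝ) < (2:ℝ)⁻¹ ^ j := by positivity
      have hxle : (2:ℝ)⁻¹ ^ j ≤ 1 := pow_le_one₀ (by norm_num) (by norm_num)
      have := Real.rpow_le_rpow_of_exponent_ge hxpos hxle hp
      rwa [Real.rpow_one] at this
    have hx0 : (0:ℝ) ≤ ((2:ℝ)⁻¹ ^ j) ^ p := Real.rpow_nonneg (by positivity) _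
    have hsum2 : (∑ i ∈ Finset.range (2 * kj j), 1 / Λ i) = Λb (2 * kj j) := rfl
    rw [hhpv, hsum2]
    calc ((2:ℝ)⁻¹ ^ j) ^ p / Λb (kj j) * Λb (2 * kj j)
        ≤ ((2:ℝ)⁻¹ ^ j) ^ p / Λb (kj j) * (2 * Λb (kj j)) :=
          mul_le_mul_of_nonneg_left (hΛb2 _) (div_nonneg hx0 hpj.le)
      _ = 2 * ((2:ℝ)⁻¹ ^ j) ^ p := by field_simp
      _ ≤ 2 * (2:ℝ)⁻¹ ^ j := by linarith
  refine ⟨S6Aux.gf ww hh kj, S6Aux.memWS_gf p hp Λ hΛpos hΛmono hfit hh0 hhp, ?_⟩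
  rintro ⟨-, C, δ₀, hδ₀, hC⟩
  obtain ⟨j0, hj0⟩ := exists_pow_lt_of_lt_one hδ₀ (by norm_num : (2:ℝ)⁻¹ < 1)
  set j := max (max 1 j0) (⌈C⌉₊ + 1) with hjdef
  have hj1 : 1 ≤ j := le_trans (le_max_left 1 j0) (le_max_left _ _)
  have hjj0 : j0 ≤ j := le_trans (le_max_right 1 j0) (le_max_left _ _)
  have hjC : C < (j : ℝ) := by
    have h1 : C ≤ (⌈C⌉₊ : ℝ) := Nat.le_ceil C
    have h2 : (⌈C⌉₊ : ℝ) < (j : ℝ) := by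
      have : ⌈C⌉₊ < j := Nat.lt_of_lt_of_le (Nat.lt_succ_self _)
        (le_max_right (max 1 j0) (⌈C⌉₊ + 1))
      exact_mod_cast this
    linarith
  have hwwj : 0 < ww j := (hfit j).1
  have hwwle : ww j ≤ (2:ℝ)⁻¹ ^ (j + 2) := by
    show (2:ℝ)⁻¹ ^ (j + 2) / (nj j : ℝ) ≤ (2:ℝ)⁻¹ ^ (j + 2)
    exact div_le_self (by positivity) (by exact_mod_cast hnj1 j)
  have hww1 : ww j ≤ 1 := by
    refine le_trans hwwle (le_trans (S6Aux.half_pow_le (Nat.zero_le _)) ?_)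
    norm_num
  have hwwδ : ww j ≤ δ₀ := by
    refine le_trans hwwle (le_of_lt (lt_of_le_of_lt ?_ hj0))
    exact S6Aux.half_pow_le (by omega)
  have hCb := hC (ww j) hwwj hwwδ
  have hlow := S6Aux.omegaq_lower q hq hfit hh0 hBpos.le hBle hj1 (hkj1 j)
  -- algebra
  have hω1n : 0 < ω (1 / (nj j : ℝ)) := by
    refine hωpos _ (one_div_pos.mpr (hnjpos j)) ?_
    rw [div_le_one (hnjpos j)]
    exact_mod_cast hnj1 j
  have hnq : (0:ℝ) < (nj j : ℝ) ^ (1 / q) := Real.rpow_pos_of_pos (hnjpos j) _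
  have hΛKq : (0:ℝ) < (Λb (kj j)) ^ (1 / p) := Real.rpow_pos_of_pos (hΛkpos j) _
  have huval : u (nj j) = (1 / (ω (1 / (nj j : ℝ)) * (nj j : ℝ) ^ (1 / q))) *
      ((kj j : ℝ) ^ (1 / q) / (Λb (kj j)) ^ (1 / p)) := by
    simp only [hu]
    rw [hkjs j]
  set A : ℝ := (2:ℝ)⁻¹ ^ j * ((2:ℝ)⁻¹ ^ (j + 2)) ^ (1 / q) with hA
  have hApos : 0 < A := by positivity
  have hL : hh j * ((kj j : ℝ) * ww j) ^ (1 / q)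
      = A * (u (nj j) * ω (1 / (nj j : ℝ))) := by
    have h1 : ((kj j : ℝ) * ww j) ^ (1 / q)
        = (kj j : ℝ) ^ (1 / q) * ((2:ℝ)⁻¹ ^ (j + 2)) ^ (1 / q) / (nj j : ℝ) ^ (1 / q) := by
      show ((kj j : ℝ) * ((2:ℝ)⁻¹ ^ (j + 2) / (nj j : ℝ))) ^ (1 / q) = _
      rw [Real.mul_rpow (Nat.cast_nonneg _) (by positivity),
        Real.div_rpow (by positivity) (Nat.cast_nonneg _)]
      ring
    rw [huval, h1]
    show (2:ℝ)⁻¹ ^ j / (Λb (kj j)) ^ (1 / p) * _ = _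
    rw [hA]
    field_simp
  have hωw : 0 < ω (ww j) := hωpos _ hwwj hww1
  have h1n1 : 1 / (nj j : ℝ) ≤ 1 := by
    rw [div_le_one (hnjpos j)]
    exact_mod_cast hnj1 j
  have hωmon' : ω (ww j) ≤ ω (1 / (nj j : ℝ)) := by
    refine hωmono ⟨hwwj.le, hww1⟩ ⟨by positivity, h1n1⟩ ?_
    show (2:ℝ)⁻¹ ^ (j + 2) / (nj j : ℝ) ≤ 1 / (nj j : ℝ)
    gcongr
    · exact pow_le_one₀ (by norm_num) (by norm_num)
  have hTj := hnjT j
  have hTnonneg : 0 ≤ (j : ℝ) / ((2:ℝ)⁻¹ ^ j * ((2:ℝ)⁻¹ ^ (j + 2)) ^ (1 / q)) := by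
    positivity
  have hupos : 0 < u (nj j) := lt_of_le_of_lt hTnonneg hTj
  have hchain : C * ω (ww j) < hh j * ((kj j : ℝ) * ww j) ^ (1 / q) := by
    rw [hL]
    have h1 : A * (u (nj j) * ω (ww j)) ≤ A * (u (nj j) * ω (1 / (nj j : ℝ))) :=
      mul_le_mul_of_nonneg_left (mul_le_mul_of_nonneg_left hωmon' hupos.le) hApos.le
    have h2 : A * (((j : ℝ) / A) * ω (ww j)) < A * (u (nj j) * ω (ww j)) := by
      refine mul_lt_mul_of_pos_left (mul_lt_mul_of_pos_right ?_ hωw) hApos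
      rw [hA]
      exact hTj
    have h3 : A * (((j : ℝ) / A) * ω (ww j)) = (j : ℝ) * ω (ww j) := by
      field_simp
    have h4 : C * ω (ww j) < (j : ℝ) * ω (ww j) :=
      mul_lt_mul_of_pos_right hjC hωw
    linarith
  linarith [hlow, hCb, hchain]
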